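/- On ℝ with the reflection group G = {id, -id}, so that d(x,y) = min(|x-y|, |x+y|), define f(x) = -1 for x ≤ -π/2, f(x) = sin x for -π/2 < x < π/2, and f(x) = 1 for x ≥ π/2. Then for every β ∈ (0,1): (a) sup_{x≠y} |f(x)-f(y)|/|x-y|^β < ∞, but (b) sup_{d(x,y)≠0} |f(x)-f(y)|/d(x,y)^β = ∞. Hence Λ^β_d is a proper subset of Λ^β. -/
import Mathlib

private lemma clamp_lip (a c x y : ℝ) :
    |min c (max a x) - min c (max a y)| ≤ |x - y| := by
  rcases le_total a x with h1 | h1 <;> rcases le_total a y with h2 | h2 <;>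
  rcases le_total (max a x) c with h3 | h3 <;> rcases le_total (max a y) c with h4 | h4 <;>
  simp_all [min_eq_left, min_eq_right, max_eq_left, max_eq_right, abs_le] <;>
  constructor <;> cases abs_le.mp (le_refl |x - y|) <;> linarith [le_abs_self (x - y), neg_abs_le (x - y), le_max_left a x, le_max_right a x, le_max_left a y, le_max_right a y]

/-- On `ℝ` with the reflection group `{±1}`, `d(x,y) = min(|x-y|, |x+y|)`.  The
function equal to `-1` for `x ≤ -π/2`, `sin x` for `-π/2 < x < π/2`, and `1` for `x ≥ π/2`
belongs to `Λ^β` but not to `Λ^β_d`, for every `β ∈ (0,1)`.  Hence `Λ^β_d ⊊ Λ^β`. -/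
theorem stmt3 (β : ℝ) (hβ : β ∈ Set.Ioo (0:ℝ) 1)
    (f : ℝ → ℝ)
    (hf1 : ∀ x : ℝ, x ≤ -(Real.pi/2) → f x = -1)
    (hf2 : ∀ x ∈ Set.Ioo (-(Real.pi/2)) (Real.pi/2), f x = Real.sin x)
    (hf3 : ∀ x : ℝ, Real.pi/2 ≤ x → f x = 1) :
    (∃ C : ℝ, ∀ x y : ℝ, x ≠ y → |f x - f y| ≤ C * |x - y| ^ β) ∧
      ¬ (∃ C : ℝ, ∀ x y : ℝ, min |x - y| |x + y| ≠ 0 →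
        |f x - f y| ≤ C * (min |x - y| |x + y|) ^ β) := by
  obtain ⟨hβ0, hβ1⟩ := hβ
  have hpi := Real.pi_pos
  -- f equals sin of the clamp of x to [-π/2, π/2]
  have hrep : ∀ x : ℝ, f x = Real.sin (min (Real.pi/2) (max (-(Real.pi/2)) x)) := by
    intro x
    rcases le_or_gt x (-(Real.pi/2)) with h | h
    · rw [hf1 x h, max_eq_left h, min_eq_right (by linarith), Real.sin_neg, Real.sin_pi_div_two]
    · rcases lt_or_ge x (Real.pi/2) with h2 | h2
      · rw [hf2 x ⟨h, h2⟩, max_eq_right h.le, min_eq_right h2.le]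
      · rw [hf3 x h2, min_eq_left (by simpa using le_max_of_le_right h2), Real.sin_pi_div_two]
  -- f is 1-Lipschitz
  have hlip : ∀ x y : ℝ, |f x - f y| ≤ |x - y| := by
    intro x y
    rw [hrep x, hrep y]
    have sinlip : ∀ a b : ℝ, |Real.sin a - Real.sin b| ≤ |a - b| := by
      intro a b
      rw [Real.sin_sub_sin]
      calc |2 * Real.sin ((a - b) / 2) * Real.cos ((a + b) / 2)|
          = 2 * |Real.sin ((a - b) / 2)| * |Real.cos ((a + b) / 2)| := by
            rw [abs_mul, abs_mul]; norm_num
        _ ≤ 2 * |(a - b) / 2| * 1 := by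
            apply mul_le_mul (by nlinarith [Real.abs_sin_le_abs (x := (a-b)/2)])
              (Real.abs_cos_le_one _) (abs_nonneg _)
              (by positivity)
        _ = |a - b| := by rw [abs_div, abs_two]; ring
    calc |Real.sin (min (Real.pi/2) (max (-(Real.pi/2)) x)) -
            Real.sin (min (Real.pi/2) (max (-(Real.pi/2)) y))|
        ≤ |min (Real.pi/2) (max (-(Real.pi/2)) x) - min (Real.pi/2) (max (-(Real.pi/2)) y)| :=
          sinlip _ _
      _ ≤ |x - y| := clamp_lip _ _ x y
  -- f is bounded by 1
  have hbd : ∀ x : ℝ, |f x| ≤ 1 := by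
    intro x; rw [hrep x]; exact Real.abs_sin_le_one _
  constructor
  · refine ⟨2, fun x y hxy => ?_⟩
    have hxy' : (0:ℝ) < |x - y| := abs_pos.mpr (sub_ne_zero.mpr hxy)
    rcases le_or_gt |x - y| 1 with h | h
    · have h1 : |x - y| ^ (1:ℝ) ≤ |x - y| ^ β :=
        Real.rpow_le_rpow_of_exponent_ge hxy' h hβ1.le
      rw [Real.rpow_one] at h1
      have := hlip x y
      nlinarith [Real.rpow_nonneg (abs_nonneg (x - y)) β]
    · have h1 : (1:ℝ) ≤ |x - y| ^ β := Real.one_le_rpow h.le hβ0.le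
      have h2 : |f x - f y| ≤ 2 := by
        have := hbd x; have := hbd y
        calc |f x - f y| ≤ |f x| + |f y| := abs_sub _ _
          _ ≤ 2 := by linarith
      nlinarith
  · rintro ⟨C, hC⟩
    set δ : ℝ := (1 / (|C| + 1)) ^ (1/β) with hδdef
    have hCpos : (0:ℝ) < |C| + 1 := by positivity
    have hδpos : 0 < δ := Real.rpow_pos_of_pos (by positivity) _
    have hδle1 : δ ≤ 1 := Real.rpow_le_one (by positivity)
      (by rw [div_le_one hCpos]; linarith [abs_nonneg C]) (by positivity)
    have hδβ : δ ^ β = 1 / (|C| + 1) := by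
      rw [hδdef, ← Real.rpow_mul (by positivity), one_div_mul_cancel (ne_of_gt hβ0),
        Real.rpow_one]
    have hfx : f (Real.pi/2) = 1 := hf3 _ le_rfl
    have hfy : f (-(Real.pi/2) - δ) = -1 := hf1 _ (by linarith)
    have hxy : |Real.pi/2 - (-(Real.pi/2) - δ)| = Real.pi + δ := by
      rw [abs_of_pos (by linarith)]; ring
    have hxyy : |Real.pi/2 + (-(Real.pi/2) - δ)| = δ := by
      have h : Real.pi/2 + (-(Real.pi/2) - δ) = -δ := by ring
      rw [h, abs_neg, abs_of_pos hδpos]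
    have hmin : min |Real.pi/2 - (-(Real.pi/2) - δ)| |Real.pi/2 + (-(Real.pi/2) - δ)| = δ := by
      rw [hxy, hxyy, min_eq_right (by linarith)]
    have h2 := hC (Real.pi/2) (-(Real.pi/2) - δ) (by rw [hmin]; exact ne_of_gt hδpos)
    rw [hfx, hfy, hmin, hδβ] at h2
    have habs : |(1:ℝ) - -1| = 2 := by norm_num
    rw [habs] at h2
    have hlt : C * (1 / (|C| + 1)) < 1 := by
      rw [mul_one_div, div_lt_one hCpos]
      linarith [le_abs_self C]
    linarith -- dummy, replaced below
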